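/- Let Δ be a filter that is DN for every rule of a program P. If a query S loops with respect to P and S' is Δ-more general than S, then S' loops with respect to P. -/

import Mathlib

/- A formalization of binary CLP(C): terms, constraints, queries, rules,
   derivation steps, loops, projections, filters, DN / DNlog / DNsyn. -/

namespace CLP

/-- First-order terms over a signature of function symbols `F` with arities `arF`. -/
inductive Tm (F : Type) (arF : F → ℕ) : Type
  | var : ℕ → Tm F arF
  | app : (f : F) → (Fin (arF f) → Tm F arF) → Tm F arF

variable {F : Type} {arF : F → ℕ} {Pc : Type} {arP : Pc → ℕ}
  {Prd : Type} {arPrd : Prd → ℕ} {D : Type}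

/-- Variables of a term. -/
def Tm.fv : Tm F arF → Finset ℕ
  | .var x => {x}
  | .app _ ts => Finset.univ.biUnion fun i => (ts i).fv

/-- Apply a variable substitution to a term. -/
def Tm.rename (σ : ℕ → ℕ) : Tm F arF → Tm F arF
  | .var x => .var (σ x)
  | .app f ts => .app f fun i => (ts i).rename σ

/-- Finite conjunctions of primitive constraints (including equality). -/
inductive Con (F : Type) (arF : F → ℕ) (Pc : Type) (arP : Pc → ℕ) : Type
  | tru : Con F arF Pc arP
  | eq : Tm F arF → Tm F arF → Con F arF Pc arP
  | prim : (c : Pc) → (Fin (arP c) → Tm F arF) → Con F arF Pc arP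
  | and : Con F arF Pc arP → Con F arF Pc arP → Con F arF Pc arP

/-- Variables of a constraint. -/
def Con.fv : Con F arF Pc arP → Finset ℕ
  | .tru => ∅
  | .eq s t => s.fv ∪ t.fv
  | .prim _ ts => Finset.univ.biUnion fun i => (ts i).fv
  | .and c d => c.fv ∪ d.fv

/-- Apply a variable substitution to a constraint. -/
def Con.rename (σ : ℕ → ℕ) : Con F arF Pc arP → Con F arF Pc arP
  | .tru => .tru
  | .eq s t => .eq (s.rename σ) (t.rename σ)
  | .prim c ts => .prim c fun i => (ts i).rename σ
  | .and c d => .and (c.rename σ) (d.rename σ)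

/-- The domain of computation `D_C`: an interpretation of the function and
constraint-predicate symbols over a domain `D`. -/
structure Interp (F : Type) (arF : F → ℕ) (Pc : Type) (arP : Pc → ℕ) (D : Type) where
  fn : (f : F) → (Fin (arF f) → D) → D
  pr : (c : Pc) → (Fin (arP c) → D) → Prop

/-- Evaluation of a term under a valuation `v : Var → D`. -/
def Tm.eval (If : (f : F) → (Fin (arF f) → D) → D) (v : ℕ → D) : Tm F arF → D
  | .var x => v x
  | .app f ts => If f fun i => (ts i).eval If v

/-- `D_C ⊨_v c`. -/
def Con.Sat (I : Interp F arF Pc arP D) (v : ℕ → D) : Con F arF Pc arP → Prop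
  | .tru => True
  | .eq s t => s.eval I.fn v = t.eval I.fn v
  | .prim c ts => I.pr c fun i => (ts i).eval I.fn v
  | .and c d => c.Sat I v ∧ d.Sat I v

/-- A query `⟨p(t̃) | d⟩`. -/
structure Query (F : Type) (arF : F → ℕ) (Pc : Type) (arP : Pc → ℕ)
    (Prd : Type) (arPrd : Prd → ℕ) where
  p : Prd
  args : Fin (arPrd p) → Tm F arF
  con : Con F arF Pc arP

/-- Variables of a query. -/
def Query.fv (S : Query F arF Pc arP Prd arPrd) : Finset ℕ :=
  (Finset.univ.biUnion fun i => (S.args i).fv) ∪ S.con.fv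

/-- Apply a variable substitution to a query. -/
def Query.rename (σ : ℕ → ℕ) (S : Query F arF Pc arP Prd arPrd) :
    Query F arF Pc arP Prd arPrd :=
  ⟨S.p, fun i => (S.args i).rename σ, S.con.rename σ⟩

/-- The set `[S]` of atoms (predicate applied to domain values) described by a query `S`. -/
def Query.set (I : Interp F arF Pc arP D) (S : Query F arF Pc arP Prd arPrd) :
    Set (Σ p : Prd, Fin (arPrd p) → D) :=
  { a | ∃ v : ℕ → D, S.con.Sat I v ∧ a = ⟨S.p, fun i => (S.args i).eval I.fn v⟩ }

/-- `S'` is more general than `S` iff `[S] ⊆ [S']`. -/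
def MoreGen (I : Interp F arF Pc arP D) (S' S : Query F arF Pc arP Prd arPrd) : Prop :=
  S.set I ⊆ S'.set I

/-- A binary rule `p(s̃) ← c ◇ q(t̃)`. -/
structure Rule (F : Type) (arF : F → ℕ) (Pc : Type) (arP : Pc → ℕ)
    (Prd : Type) (arPrd : Prd → ℕ) where
  hp : Prd
  hargs : Fin (arPrd hp) → Tm F arF
  con : Con F arF Pc arP
  bp : Prd
  bargs : Fin (arPrd bp) → Tm F arF

/-- Variables of a rule. -/
def Rule.fv (r : Rule F arF Pc arP Prd arPrd) : Finset ℕ :=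
  (Finset.univ.biUnion fun i => (r.hargs i).fv) ∪ r.con.fv ∪
    (Finset.univ.biUnion fun i => (r.bargs i).fv)

/-- Apply a variable substitution to a rule. -/
def Rule.rename (σ : ℕ → ℕ) (r : Rule F arF Pc arP Prd arPrd) : Rule F arF Pc arP Prd arPrd :=
  ⟨r.hp, fun i => (r.hargs i).rename σ, r.con.rename σ, r.bp, fun i => (r.bargs i).rename σ⟩

/-- `r'` is a variant of `r`: obtained by renaming the variables by a bijection. -/
def Rule.IsVariant (r r' : Rule F arF Pc arP Prd arPrd) : Prop :=
  ∃ ρ : ℕ ≃ ℕ, r' = r.rename ρ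

/-- The query `⟨H | c⟩` of a rule `H ← c ◇ B`. -/
def Rule.headQuery (r : Rule F arF Pc arP Prd arPrd) : Query F arF Pc arP Prd arPrd :=
  ⟨r.hp, r.hargs, r.con⟩

/-- The query `⟨B | c⟩` of a rule `H ← c ◇ B`. -/
def Rule.bodyQuery (r : Rule F arF Pc arP Prd arPrd) : Query F arF Pc arP Prd arPrd :=
  ⟨r.bp, r.bargs, r.con⟩

/-- The constraint `ũ = w̃` for two sequences of terms. -/
def argsEqCon {n : ℕ} (u w : Fin n → Tm F arF) : Con F arF Pc arP :=
  (List.ofFn fun i => Con.eq (u i) (w i)).foldr .and .tru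

/-- The constraint `s̃' = ũ ∧ c' ∧ d` of the query resulting from a derivation step of
`S = ⟨p(ũ) | d⟩` with input rule `r' = p(s̃') ← c' ◇ q(t̃')`. -/
def stepCon (r' : Rule F arF Pc arP Prd arPrd) (S : Query F arF Pc arP Prd arPrd)
    (h : r'.hp = S.p) : Con F arF Pc arP :=
  Con.and
    (argsEqCon (fun i : Fin (arPrd S.p) => r'.hargs (Fin.cast (congrArg arPrd h).symm i)) S.args)
    (Con.and r'.con S.con)

/-- Derivation step of `S` using the (already renamed-apart) input rule `r'`:
the constraint `s̃' = ũ ∧ c' ∧ d` must be satisfiable in `D_C`, and the resulting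
query is `⟨q(t̃') | s̃' = ũ ∧ c' ∧ d⟩`. -/
def StepWith (I : Interp F arF Pc arP D) (r' : Rule F arF Pc arP Prd arPrd)
    (S T : Query F arF Pc arP Prd arPrd) : Prop :=
  ∃ h : r'.hp = S.p, (∃ v : ℕ → D, (stepCon r' S h).Sat I v) ∧
    T = ⟨r'.bp, r'.bargs, stepCon r' S h⟩

/-- Derivation step `S ⟹_r T`: there is a variant `r'` of `r`, variable disjoint
with `S`, which is an input rule for a step from `S` to `T`. -/
def Step (I : Interp F arF Pc arP D) (r : Rule F arF Pc arP Prd arPrd)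
    (S T : Query F arF Pc arP Prd arPrd) : Prop :=
  ∃ r' : Rule F arF Pc arP Prd arPrd,
    r.IsVariant r' ∧ Disjoint r'.fv S.fv ∧ StepWith I r' S T

/-- `S₀` loops w.r.t. the program `P`: there is an infinite derivation of `P ∪ {S₀}`,
i.e. an infinite sequence of derivation steps whose input rules are variants of rules
of `P`, variable disjoint from `S₀` and from the input rules used at earlier steps
(standardization apart). -/
def Loops (I : Interp F arF Pc arP D) (P : Set (Rule F arF Pc arP Prd arPrd))
    (S₀ : Query F arF Pc arP Prd arPrd) : Prop :=
  ∃ (S : ℕ → Query F arF Pc arP Prd arPrd) (rv : ℕ → Rule F arF Pc arP Prd arPrd),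
    S 0 = S₀ ∧
    ∀ n : ℕ, (∃ r ∈ P, r.IsVariant (rv n)) ∧
      Disjoint (rv n).fv S₀.fv ∧ (∀ m < n, Disjoint (rv n).fv (rv m).fv) ∧
      StepWith I (rv n) (S n) (S (n + 1))

/-! ## Sets of positions, projections, filters -/

/-- The set `[S|τ]` of projected atoms described by the projection of a query on a
set of positions `τ`. -/
def Query.projSet (I : Interp F arF Pc arP D) (τ : ∀ p : Prd, Set (Fin (arPrd p)))
    (S : Query F arF Pc arP Prd arPrd) :
    Set (Σ p : Prd, {i : Fin (arPrd p) // i ∈ τ p} → D) :=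
  { a | ∃ v : ℕ → D, S.con.Sat I v ∧ a = ⟨S.p, fun i => (S.args i.1).eval I.fn v⟩ }

/-- The complement `τ̄` of a set of positions. -/
def complPos (τ : ∀ p : Prd, Set (Fin (arPrd p))) : ∀ p : Prd, Set (Fin (arPrd p)) :=
  fun p => (τ p)ᶜ

/-- A query over a projected predicate `p|τ`. -/
structure PQuery (F : Type) (arF : F → ℕ) (Pc : Type) (arP : Pc → ℕ)
    {Prd : Type} {arPrd : Prd → ℕ} (τ : ∀ p : Prd, Set (Fin (arPrd p))) (p : Prd) where
  args : {i : Fin (arPrd p) // i ∈ τ p} → Tm F arF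
  con : Con F arF Pc arP

/-- The set of projected atoms described by a projected query. -/
def PQuery.set (I : Interp F arF Pc arP D) {τ : ∀ p : Prd, Set (Fin (arPrd p))} {p : Prd}
    (Q : PQuery F arF Pc arP τ p) :
    Set (Σ q : Prd, {i : Fin (arPrd q) // i ∈ τ q} → D) :=
  { a | ∃ v : ℕ → D, Q.con.Sat I v ∧ a = ⟨p, fun i => (Q.args i).eval I.fn v⟩ }

/-- A filter `Δ = (τ, δ)`: a set of positions together with, for each predicate `p`,
a query `δ(p)` over the projected predicate `p|τ` with satisfiable constraint. -/
structure Filt {F : Type} {arF : F → ℕ} {Pc : Type} {arP : Pc → ℕ} {D : Type}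
    (I : Interp F arF Pc arP D) (Prd : Type) (arPrd : Prd → ℕ) where
  τ : ∀ p : Prd, Set (Fin (arPrd p))
  δ : ∀ p : Prd, PQuery F arF Pc arP τ p
  δ_sat : ∀ p : Prd, ∃ v : ℕ → D, (δ p).con.Sat I v

variable {I : Interp F arF Pc arP D}

/-- A query `S` satisfies the filter `Δ` iff `[S|τ] ⊆ [δ(rel(S))]`. -/
def Filt.Satisfies (Δ : Filt I Prd arPrd) (S : Query F arF Pc arP Prd arPrd) : Prop :=
  S.projSet I Δ.τ ⊆ (Δ.δ S.p).set I

/-- `S'` is `Δ`-more general than `S`: `S'|τ̄` is more general than `S|τ̄`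
and `S'` satisfies `Δ`. -/
def Filt.DeltaMoreGen (Δ : Filt I Prd arPrd) (S' S : Query F arF Pc arP Prd arPrd) : Prop :=
  S.projSet I (complPos Δ.τ) ⊆ S'.projSet I (complPos Δ.τ) ∧ Δ.Satisfies S'

/-- `Δ` is derivation neutral (DN) for `r`. -/
def Filt.DN (Δ : Filt I Prd arPrd) (r : Rule F arF Pc arP Prd arPrd) : Prop :=
  ∀ S T, Step I r S T → ∀ S', Δ.DeltaMoreGen S' S →
    ∃ T', Step I r S' T' ∧ Δ.DeltaMoreGen T' T

/-! ## Normalized rules and DNlog -/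

/-- A normalized rule `p(X̃) ← c ◇ q(Ỹ)` where `X̃, Ỹ` are disjoint sequences of
distinct variables. -/
structure NRule (F : Type) (arF : F → ℕ) (Pc : Type) (arP : Pc → ℕ)
    (Prd : Type) (arPrd : Prd → ℕ) where
  hp : Prd
  X : Fin (arPrd hp) → ℕ
  bp : Prd
  Y : Fin (arPrd bp) → ℕ
  hX : Function.Injective X
  hY : Function.Injective Y
  hXY : ∀ i j, X i ≠ Y j
  con : Con F arF Pc arP

/-- The underlying rule of a normalized rule. -/
def NRule.toRule (r : NRule F arF Pc arP Prd arPrd) : Rule F arF Pc arP Prd arPrd :=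
  ⟨r.hp, fun i => .var (r.X i), r.con, r.bp, fun i => .var (r.Y i)⟩

/-- `local_var(r) = Var(c) ∖ (Var(X̃) ∪ Var(Ỹ))`. -/
def NRule.localVar (r : NRule F arF Pc arP Prd arPrd) : Set ℕ :=
  ↑r.con.fv \ (Set.range r.X ∪ Set.range r.Y)

/-- `v` and `w` agree on all variables outside `W`. -/
def agreesOff (W : Set ℕ) (v w : ℕ → D) : Prop := ∀ x ∉ W, v x = w x

/-- Semantics under `v` of the formula `sat(s̃, Q) = ∃_{Var(Q')} (s̃ = ũ' ∧ d')`,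
`Q'` a variable-disjoint variant of `Q = ⟨p|τ(ũ) | d⟩`. -/
def satFor (I : Interp F arF Pc arP D) {τ : ∀ p : Prd, Set (Fin (arPrd p))} {p : Prd}
    (s : {i : Fin (arPrd p) // i ∈ τ p} → Tm F arF) (Q : PQuery F arF Pc arP τ p)
    (v : ℕ → D) : Prop :=
  ∃ w : ℕ → D, Q.con.Sat I w ∧ ∀ i, (s i).eval I.fn v = (Q.args i).eval I.fn w

/-- `Δ` is DNlog for a normalized rule `r = p(X̃) ← c ◇ q(Ỹ)`:
`D_C ⊨ c → ∀_{X̃|τ} [ sat(X̃|τ, δ(p)) → ∃_Y (sat(Ỹ|τ, δ(q)) ∧ c) ]` where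
`Y = Var(Ỹ|τ) ∪ local_var(r)`. -/
def Filt.DNlog (Δ : Filt I Prd arPrd) (r : NRule F arF Pc arP Prd arPrd) : Prop :=
  ∀ v : ℕ → D, r.con.Sat I v →
    ∀ v₁ : ℕ → D, agreesOff (r.X '' Δ.τ r.hp) v₁ v →
      satFor I (fun i => Tm.var (r.X i.1)) (Δ.δ r.hp) v₁ →
        ∃ v₂ : ℕ → D,
          agreesOff (r.Y '' Δ.τ r.bp ∪ r.localVar) v₂ v₁ ∧
          satFor I (fun i => Tm.var (r.Y i.1)) (Δ.δ r.bp) v₂ ∧ r.con.Sat I v₂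

/-! ## Flat rules and DNsyn -/

/-- Variables of a sequence of terms. -/
def varsOf {n : ℕ} (s : Fin n → Tm F arF) : Finset ℕ :=
  Finset.univ.biUnion fun i => (s i).fv

/-- Variables of the projection of a sequence of terms on a set of positions. -/
def varsOfProj {n : ℕ} (σ : Set (Fin n)) (s : Fin n → Tm F arF) : Set ℕ :=
  ⋃ i : {i : Fin n // i ∈ σ}, ↑(s i.1).fv

/-- A flat rule `p(X̃) ← (X̃ = s̃ ∧ Ỹ = t̃) ◇ q(Ỹ)` with `Var(s̃, t̃)` local. -/
structure FlatRule (F : Type) (arF : F → ℕ) (Pc : Type) (arP : Pc → ℕ)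
    (Prd : Type) (arPrd : Prd → ℕ) extends NRule F arF Pc arP Prd arPrd where
  s : Fin (arPrd hp) → Tm F arF
  t : Fin (arPrd bp) → Tm F arF
  con_eq : con = Con.and (argsEqCon (fun i => Tm.var (X i)) s)
                         (argsEqCon (fun i => Tm.var (Y i)) t)
  local_args : ∀ x ∈ varsOf s ∪ varsOf t, x ∉ Set.range X ∪ Set.range Y

/-! ## The constraint domain Term (logic programming) -/

/-- Finite trees (ground terms) over `F`. -/
inductive GTm (F : Type) (arF : F → ℕ) : Type
  | app : (f : F) → (Fin (arF f) → GTm F arF) → GTm F arF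

/-- Arities for the empty set of constraint-predicate symbols (only `=` is available). -/
def emptyAr : Empty → ℕ := fun c => c.elim

/-- The domain of computation of the constraint domain `Term`: the algebra of
finite trees, with no primitive constraints but equality. -/
def termInterp (F : Type) (arF : F → ℕ) : Interp F arF Empty emptyAr (GTm F arF) :=
  ⟨fun f ts => GTm.app f ts, fun c => c.elim⟩

end CLP
namespace CLP
variable {F : Type} {arF : F → ℕ} {Pc : Type} {arP : Pc → ℕ}
  {Prd : Type} {arPrd : Prd → ℕ} {D : Type} {I : Interp F arF Pc arP D}

theorem Tm.eval_rename (If : (f : F) → (Fin (arF f) → D) → D) (σ : ℕ → ℕ) (v : ℕ → D) :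
    ∀ t : Tm F arF, (t.rename σ).eval If v = t.eval If (fun x => v (σ x))
  | .var x => rfl
  | .app f ts => by
    simp only [Tm.rename, Tm.eval]
    congr 1; funext i; exact Tm.eval_rename If σ v (ts i)

theorem Con.sat_rename (σ : ℕ → ℕ) (v : ℕ → D) :
    ∀ c : Con F arF Pc arP, (c.rename σ).Sat I v ↔ c.Sat I (fun x => v (σ x))
  | .tru => Iff.rfl
  | .eq s t => by simp [Con.rename, Con.Sat, Tm.eval_rename]
  | .prim c ts => by simp [Con.rename, Con.Sat, Tm.eval_rename]
  | .and c d => by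
    simp [Con.rename, Con.Sat, Con.sat_rename σ v c, Con.sat_rename σ v d]

theorem Tm.fv_rename (σ : ℕ → ℕ) :
    ∀ t : Tm F arF, (t.rename σ).fv = t.fv.image σ
  | .var x => by simp [Tm.rename, Tm.fv]
  | .app f ts => by
    simp only [Tm.rename, Tm.fv, Finset.biUnion_image]
    exact Finset.biUnion_congr rfl fun i _ => Tm.fv_rename σ (ts i)

theorem Con.fv_rename (σ : ℕ → ℕ) :
    ∀ c : Con F arF Pc arP, (c.rename σ).fv = c.fv.image σ
  | .tru => rfl
  | .eq s t => by simp [Con.rename, Con.fv, Tm.fv_rename, Finset.image_union]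
  | .prim c ts => by
    simp only [Con.rename, Con.fv, Finset.biUnion_image]
    exact Finset.biUnion_congr rfl fun i _ => Tm.fv_rename σ (ts i)
  | .and c d => by
    simp [Con.rename, Con.fv, Con.fv_rename σ c, Con.fv_rename σ d, Finset.image_union]

theorem Rule.fv_rename (σ : ℕ → ℕ) (r : Rule F arF Pc arP Prd arPrd) :
    (r.rename σ).fv = r.fv.image σ := by
  simp only [Rule.rename, Rule.fv, Finset.image_union, Finset.biUnion_image,
    Con.fv_rename, Tm.fv_rename]
  rfl

theorem Tm.rename_fix (σ : ℕ → ℕ) :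
    ∀ t : Tm F arF, (∀ x ∈ t.fv, σ x = x) → t.rename σ = t
  | .var x, h => by simp [Tm.rename, h x (by simp [Tm.fv])]
  | .app f ts, h => by
    simp only [Tm.rename]
    congr 1; funext i
    exact Tm.rename_fix σ (ts i) fun x hx => h x (by simp [Tm.fv]; exact ⟨i, hx⟩)

theorem Con.rename_fix (σ : ℕ → ℕ) :
    ∀ c : Con F arF Pc arP, (∀ x ∈ c.fv, σ x = x) → c.rename σ = c
  | .tru, _ => rfl
  | .eq s t, h => by
    simp only [Con.rename]
    rw [Tm.rename_fix σ s fun x hx => h x (by simp [Con.fv, hx]),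
      Tm.rename_fix σ t fun x hx => h x (by simp [Con.fv, hx])]
  | .prim c ts, h => by
    simp only [Con.rename]
    congr 1; funext i
    exact Tm.rename_fix σ (ts i) fun x hx => h x (by simp [Con.fv]; exact ⟨i, hx⟩)
  | .and c d, h => by
    simp only [Con.rename]
    rw [Con.rename_fix σ c fun x hx => h x (by simp [Con.fv, hx]),
      Con.rename_fix σ d fun x hx => h x (by simp [Con.fv, hx])]

theorem Tm.rename_comp (σ σ' : ℕ → ℕ) :
    ∀ t : Tm F arF, (t.rename σ).rename σ' = t.rename (fun x => σ' (σ x))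
  | .var x => rfl
  | .app f ts => by
    simp only [Tm.rename]
    congr 1; funext i; exact Tm.rename_comp σ σ' (ts i)

theorem Con.rename_comp (σ σ' : ℕ → ℕ) :
    ∀ c : Con F arF Pc arP, (c.rename σ).rename σ' = c.rename (fun x => σ' (σ x))
  | .tru => rfl
  | .eq s t => by simp [Con.rename, Tm.rename_comp]
  | .prim c ts => by
    simp only [Con.rename]
    congr 1; funext i; exact Tm.rename_comp σ σ' (ts i)
  | .and c d => by simp [Con.rename, Con.rename_comp σ σ' c, Con.rename_comp σ σ' d]

theorem Rule.rename_comp (σ σ' : ℕ → ℕ) (r : Rule F arF Pc arP Prd arPrd) :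
    (r.rename σ).rename σ' = r.rename (fun x => σ' (σ x)) := by
  simp only [Rule.rename, Con.rename_comp, Tm.rename_comp]

theorem Rule.IsVariant.trans_perm {r r' : Rule F arF Pc arP Prd arPrd}
    (h : r.IsVariant r') (ρ : ℕ ≃ ℕ) : r.IsVariant (r'.rename ρ) := by
  obtain ⟨ρ₁, rfl⟩ := h
  exact ⟨ρ₁.trans ρ, by rw [Rule.rename_comp]; rfl⟩

theorem foldr_and_rename (σ : ℕ → ℕ) (l : List (Con F arF Pc arP)) :
    (l.foldr Con.and Con.tru).rename σ = (l.map (Con.rename σ)).foldr Con.and Con.tru := by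
  induction l with
  | nil => rfl
  | cons c l ih => simp [Con.rename, ih]

theorem argsEqCon_rename (σ : ℕ → ℕ) {n : ℕ} (u w : Fin n → Tm F arF) :
    (argsEqCon (Pc := Pc) (arP := arP) u w).rename σ
      = argsEqCon (fun i => (u i).rename σ) (fun i => (w i).rename σ) := by
  simp only [argsEqCon, foldr_and_rename, List.map_ofFn]
  rfl

theorem mem_fv_foldr_and {l : List (Con F arF Pc arP)} {x : ℕ}
    (hx : x ∈ (l.foldr Con.and Con.tru).fv) : ∃ c ∈ l, x ∈ c.fv := by
  induction l with
  | nil => simp [Con.fv] at hx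
  | cons c l ih =>
    simp only [List.foldr, Con.fv, Finset.mem_union] at hx
    rcases hx with h | h
    · exact ⟨c, by simp, h⟩
    · obtain ⟨d, hd, hxd⟩ := ih h
      exact ⟨d, by simp [hd], hxd⟩

theorem argsEqCon_fv {n : ℕ} {u w : Fin n → Tm F arF} {x : ℕ}
    (hx : x ∈ (argsEqCon (Pc := Pc) (arP := arP) u w).fv) :
    ∃ i, x ∈ (u i).fv ∨ x ∈ (w i).fv := by
  obtain ⟨c, hc, hxc⟩ := mem_fv_foldr_and hx
  simp only [List.mem_ofFn] at hc
  obtain ⟨i, rfl⟩ := hc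
  simp only [Con.fv, Finset.mem_union] at hxc
  exact ⟨i, hxc⟩

theorem step_target_fv {r' : Rule F arF Pc arP Prd arPrd} {Sq : Query F arF Pc arP Prd arPrd}
    (h : r'.hp = Sq.p) :
    (Query.fv ⟨r'.bp, r'.bargs, stepCon r' Sq h⟩ : Finset ℕ) ⊆ r'.fv ∪ Sq.fv := by
  intro x hx
  simp only [Query.fv, Finset.mem_union, Finset.mem_biUnion, Finset.mem_univ, true_and] at hx
  rcases hx with ⟨i, hi⟩ | hx
  · exact Finset.mem_union_left _ (by
      simp only [Rule.fv, Finset.mem_union, Finset.mem_biUnion, Finset.mem_univ, true_and]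
      exact Or.inr ⟨i, hi⟩)
  · simp only [stepCon, Con.fv, Finset.mem_union] at hx
    rcases hx with hx | hx | hx
    · obtain ⟨i, hi⟩ := argsEqCon_fv hx
      rcases hi with hi | hi
      · exact Finset.mem_union_left _ (by
          simp only [Rule.fv, Finset.mem_union, Finset.mem_biUnion, Finset.mem_univ, true_and]
          exact Or.inl (Or.inl ⟨_, hi⟩))
      · exact Finset.mem_union_right _ (by
          simp only [Query.fv, Finset.mem_union, Finset.mem_biUnion, Finset.mem_univ, true_and]
          exact Or.inl ⟨i, hi⟩)
    · exact Finset.mem_union_left _ (by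
        simp only [Rule.fv, Finset.mem_union]
        exact Or.inl (Or.inr hx))
    · exact Finset.mem_union_right _ (by
        simp only [Query.fv, Finset.mem_union]
        exact Or.inr hx)

theorem Query.projSet_rename (τ : ∀ p : Prd, Set (Fin (arPrd p))) (ρ : ℕ ≃ ℕ)
    (Sq : Query F arF Pc arP Prd arPrd) :
    (Sq.rename ρ).projSet I τ = Sq.projSet I τ := by
  ext a
  simp only [Query.projSet, Query.rename, Set.mem_setOf_eq]
  constructor
  · rintro ⟨v, hv, rfl⟩
    refine ⟨fun x => v (ρ x), (Con.sat_rename _ _ _).1 hv, ?_⟩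
    simp [Tm.eval_rename]
    rfl
  · rintro ⟨v, hv, rfl⟩
    refine ⟨fun x => v (ρ.symm x), ?_, ?_⟩
    · rw [Con.sat_rename]
      simpa using hv
    · congr 1; funext i
      rw [Tm.eval_rename]
      simp

theorem Filt.DeltaMoreGen.rename_left {Δ : Filt I Prd arPrd}
    {T U : Query F arF Pc arP Prd arPrd} (h : Δ.DeltaMoreGen T U) (ρ : ℕ ≃ ℕ) :
    Δ.DeltaMoreGen (T.rename ρ) U := by
  obtain ⟨h1, h2⟩ := h
  constructor
  · rw [Query.projSet_rename]; exact h1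
  · unfold Filt.Satisfies at h2 ⊢
    rw [Query.projSet_rename]
    exact h2

theorem fresh_perm (K A B : Finset ℕ) (hKA : Disjoint K A) :
    ∃ ρ : ℕ ≃ ℕ, (∀ x ∈ A, ρ x = x) ∧ ∀ x ∈ K, ρ x ∉ B := by
  set N := (K ∪ A ∪ B).sup id + 1 with hN
  have hlt : ∀ x ∈ K ∪ A ∪ B, x < N := fun x hx =>
    Nat.lt_succ_of_le (Finset.le_sup (f := id) hx)
  set g : ℕ → ℕ := fun x => if x ∈ K then x + N else if N ≤ x ∧ x - N ∈ K then x - N else x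
    with hg
  have hKlt : ∀ x ∈ K, x < N := fun x hx => hlt x (by simp [hx])
  have hinv : Function.Involutive g := by
    intro x
    by_cases h1 : x ∈ K
    · have hxN : x < N := hKlt x h1
      have e1 : g x = x + N := by simp [hg, h1]
      have h2 : x + N ∉ K := fun h => by have := hKlt _ h; omega
      have e2 : g (x + N) = x := by
        simp only [hg, if_neg h2]
        rw [if_pos ⟨by omega, by simpa using h1⟩]
        omega
      rw [e1, e2]
    · by_cases h2 : N ≤ x ∧ x - N ∈ K
      · have e1 : g x = x - N := by simp [hg, h1, h2]
        have e2 : g (x - N) = x := by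
          simp only [hg, if_pos h2.2]
          omega
        rw [e1, e2]
      · simp [hg, h1, h2]
  refine ⟨hinv.toPerm g, fun x hx => ?_, fun x hx => ?_⟩
  · have hxK : x ∉ K := Finset.disjoint_right.1 hKA hx
    have hxN : x < N := hlt x (by simp [hx])
    show g x = x
    simp only [hg]
    rw [if_neg hxK, if_neg (by omega)]
  · show g x ∉ B
    have e1 : g x = x + N := by simp [hg, hx]
    rw [e1]
    intro hB
    have := hlt (x + N) (Finset.mem_union_right _ hB)
    omega

end CLP
namespace CLP
variable {F : Type} {arF : F → ℕ} {Pc : Type} {arP : Pc → ℕ}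
  {Prd : Type} {arPrd : Prd → ℕ} {D : Type} {I : Interp F arF Pc arP D}

theorem StepWith.rename_perm {r' : Rule F arF Pc arP Prd arPrd}
    {Sq T : Query F arF Pc arP Prd arPrd} (ρ : ℕ ≃ ℕ)
    (hfix : ∀ x ∈ Sq.fv, ρ x = x) (h : StepWith I r' Sq T) :
    StepWith I (r'.rename ρ) Sq (T.rename ρ) := by
  obtain ⟨hp, ⟨v, hv⟩, rfl⟩ := h
  have hp' : (r'.rename ρ).hp = Sq.p := hp
  have hargsfix : (fun i => (Sq.args i).rename ρ) = Sq.args := by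
    funext i
    exact Tm.rename_fix ρ _ fun x hx => hfix x
      (Finset.mem_union_left _ (Finset.mem_biUnion.2 ⟨i, Finset.mem_univ i, hx⟩))
  have hconfix : Sq.con.rename ρ = Sq.con :=
    Con.rename_fix ρ _ fun x hx => hfix x (Finset.mem_union_right _ hx)
  have hcon : (stepCon r' Sq hp).rename ρ = stepCon (r'.rename ρ) Sq hp' := by
    simp only [stepCon, Con.rename, argsEqCon_rename, hconfix, hargsfix]
    rfl
  refine ⟨hp', ⟨fun x => v (ρ.symm x), ?_⟩, ?_⟩
  · rw [← hcon, Con.sat_rename]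
    simpa using hv
  · simp only [Query.rename, hcon]
    rfl

end CLP
open CLP in
/-- if `Δ` is DN for every rule of `P`, `S` loops w.r.t. `P` and
`S'` is `Δ`-more general than `S`, then `S'` loops w.r.t. `P`. -/
theorem stmt19 {F : Type} {arF : F → ℕ} {Pc : Type} {arP : Pc → ℕ}
    {Prd : Type} {arPrd : Prd → ℕ} {D : Type} {I : Interp F arF Pc arP D}
    (Δ : Filt I Prd arPrd) (P : Set (Rule F arF Pc arP Prd arPrd))
    (hDN : ∀ r ∈ P, Δ.DN r)
    (S S' : Query F arF Pc arP Prd arPrd)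
    (h : Loops I P S) (hmg : Δ.DeltaMoreGen S' S) :
    Loops I P S' := by
  classical
  obtain ⟨Sq, rv, hS0, hloop⟩ := h
  have hfvchain : ∀ n, (Sq n).fv ⊆ S.fv ∪ (Finset.range n).biUnion (fun m => (rv m).fv) := by
    intro n
    induction n with
    | zero => simp [hS0]
    | succ n ih =>
      obtain ⟨hp, hsat, hT⟩ := (hloop n).2.2.2
      rw [hT]
      refine (step_target_fv hp).trans ?_
      intro x hx
      rcases Finset.mem_union.1 hx with hx | hx
      · exact Finset.mem_union_right _ (Finset.mem_biUnion.2 ⟨n, by simp, hx⟩)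
      · rcases Finset.mem_union.1 (ih hx) with h | h
        · exact Finset.mem_union_left _ h
        · obtain ⟨m, hm, hxm⟩ := Finset.mem_biUnion.1 h
          refine Finset.mem_union_right _ (Finset.mem_biUnion.2 ⟨m, ?_, hxm⟩)
          simp only [Finset.mem_range] at hm ⊢
          omega
  have hstep : ∀ n, ∃ r ∈ P, Step I r (Sq n) (Sq (n+1)) := by
    intro n
    obtain ⟨⟨r, hrP, hvar⟩, hd0, hdm, hsw⟩ := hloop n
    refine ⟨r, hrP, rv n, hvar, ?_, hsw⟩
    refine Finset.disjoint_left.2 fun x hx hx' => ?_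
    rcases Finset.mem_union.1 (hfvchain n hx') with hmem | hmem
    · exact Finset.disjoint_left.1 hd0 hx hmem
    · obtain ⟨m, hm, hxm⟩ := Finset.mem_biUnion.1 hmem
      exact Finset.disjoint_left.1 (hdm m (Finset.mem_range.1 hm)) hx hxm
  have key : ∀ (n : ℕ) (q : Query F arF Pc arP Prd arPrd) (V : Finset ℕ),
      Δ.DeltaMoreGen q (Sq n) →
      ∃ y : Query F arF Pc arP Prd arPrd × Rule F arF Pc arP Prd arPrd,
        (∃ r ∈ P, r.IsVariant y.2) ∧ Disjoint y.2.fv V ∧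
        StepWith I y.2 q y.1 ∧ Δ.DeltaMoreGen y.1 (Sq (n+1)) := by
    intro n q V hq
    obtain ⟨r, hrP, hst⟩ := hstep n
    obtain ⟨T', hstT, hTmg⟩ := hDN r hrP _ _ hst q hq
    obtain ⟨r'', hvar'', hdisj'', hsw''⟩ := hstT
    obtain ⟨ρ, hfix, hfresh⟩ := fresh_perm r''.fv q.fv V hdisj''
    refine ⟨(T'.rename ρ, r''.rename ρ), ⟨r, hrP, hvar''.trans_perm ρ⟩, ?_,
      hsw''.rename_perm ρ hfix, hTmg.rename_left ρ⟩
    rw [Rule.fv_rename]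
    refine Finset.disjoint_left.2 fun x hx => ?_
    obtain ⟨y, hy, rfl⟩ := Finset.mem_image.1 hx
    exact hfresh y hy
  let Q := Query F arF Pc arP Prd arPrd
  let R := Rule F arF Pc arP Prd arPrd
  let St := fun n => {x : Q × Finset ℕ × R // Δ.DeltaMoreGen x.1 (Sq n)}
  let Nx : ∀ n, St n → St (n+1) := fun n x =>
    ⟨((key n x.1.1 x.1.2.1 x.2).choose.1,
      x.1.2.1 ∪ (key n x.1.1 x.1.2.1 x.2).choose.2.fv,
      (key n x.1.1 x.1.2.1 x.2).choose.2),
      (key n x.1.1 x.1.2.1 x.2).choose_spec.2.2.2⟩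
  have NxSpec : ∀ n (x : St n),
      (∃ r ∈ P, r.IsVariant (Nx n x).1.2.2) ∧ Disjoint (Nx n x).1.2.2.fv x.1.2.1 ∧
        StepWith I (Nx n x).1.2.2 x.1.1 (Nx n x).1.1 ∧
        (Nx n x).1.2.1 = x.1.2.1 ∪ (Nx n x).1.2.2.fv := fun n x =>
    ⟨(key n x.1.1 x.1.2.1 x.2).choose_spec.1,
     (key n x.1.1 x.1.2.1 x.2).choose_spec.2.1,
     (key n x.1.1 x.1.2.1 x.2).choose_spec.2.2.1, rfl⟩
  let junk : R := ⟨S.p, fun _ => .var 0, .tru, S.p, fun _ => .var 0⟩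
  let z : St 0 := ⟨(S', S'.fv, junk), hS0 ▸ hmg⟩
  let f : ∀ n, St n := fun n => Nat.rec z Nx n
  have hfsucc : ∀ n, f (n+1) = Nx n (f n) := fun n => rfl
  let S'seq : ℕ → Q := fun n => (f n).1.1
  let Vs : ℕ → Finset ℕ := fun n => (f n).1.2.1
  let rl : ℕ → R := fun n => (f (n+1)).1.2.2
  have spec : ∀ n, (∃ r ∈ P, r.IsVariant (rl n)) ∧ Disjoint (rl n).fv (Vs n) ∧
      StepWith I (rl n) (S'seq n) (S'seq (n+1)) ∧ Vs (n+1) = Vs n ∪ (rl n).fv := by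
    intro n
    have h1 := NxSpec n (f n)
    rw [← hfsucc n] at h1
    exact h1
  have hVmono : ∀ m n, m ≤ n → Vs m ⊆ Vs n := by
    intro m n hmn
    induction n with
    | zero => simp_all
    | succ n ih =>
      rcases Nat.lt_or_ge m (n+1) with h | h
      · refine (ih (by omega)).trans ?_
        rw [(spec n).2.2.2]
        exact Finset.subset_union_left
      · have : m = n + 1 := by omega
        subst this; rfl
  have hS'fv : ∀ n, S'.fv ⊆ Vs n := fun n => hVmono 0 n (Nat.zero_le n)
  have hrlfv : ∀ m n, m < n → (rl m).fv ⊆ Vs n := by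
    intro m n hmn
    refine Finset.Subset.trans ?_ (hVmono (m+1) n hmn)
    rw [(spec m).2.2.2]
    exact Finset.subset_union_right
  refine ⟨S'seq, rl, rfl, fun n => ⟨(spec n).1, ?_, fun m hm => ?_, (spec n).2.2.1⟩⟩
  · exact ((spec n).2.1).mono_right (hS'fv n)
  · exact ((spec n).2.1).mono_right (hrlfv m n hm)
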